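/- If every problem f :⊆ ℕ^ℕ ⇉ ℕ^ℕ is either continuous or effectively discontinuous, then for all A, B ⊆ ℕ^ℕ the Wadge game (A,B) is determined, where the Wadge game (A,B) is the Wadge game of the total problem B/A whose graph is (A × B) ∪ ((ℕ^ℕ ∖ A) × (ℕ^ℕ ∖ B)), i.e., Player I or Player II has a winning strategy in this game. -/
import Mathlib


noncomputable section

/-- Baire space `ℕ^ℕ`. -/
abbrev Baire : Type := ℕ → ℕ

/-- The Cantor pairing `⟨n,k⟩ = (n+k)(n+k+1)/2 + k`. -/
def cpair (n k : ℕ) : ℕ := (n + k) * (n + k + 1) / 2 + k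

/-- The inverse of the Cantor pairing. -/
noncomputable def cunpair (m : ℕ) : ℕ × ℕ :=
  Classical.epsilon fun x : ℕ × ℕ => cpair x.1 x.2 = m

/-- A fixed bijective numbering `w : ℕ → List ℕ` of finite words. -/
def word (n : ℕ) : List ℕ := Denumerable.ofNat (List ℕ) n

/-- `l` is a finite prefix of the infinite sequence `p`. -/
def IsPrefixOf (l : List ℕ) (p : Baire) : Prop := l = (List.range l.length).map p

/-- Two words are comparable in the prefix order. -/
def WordComparable (u v : List ℕ) : Prop := u <+: v ∨ v <+: u

/-- The word `w(n_i)` decoded from the `i`-th entry of the code `q`. -/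
noncomputable def wn (q : Baire) (i : ℕ) : List ℕ := word (cunpair (q i)).1

/-- The word `w(k_i)` decoded from the `i`-th entry of the code `q`. -/
noncomputable def wk (q : Baire) (i : ℕ) : List ℕ := word (cunpair (q i)).2

/-- The code `q` is consistent. -/
def ConsistentCode (q : Baire) : Prop :=
  ∀ i j, WordComparable (wn q i) (wn q j) → WordComparable (wk q i) (wk q j)

/-- The continuous partial function `Φ_q :⊆ ℕ^ℕ → ℕ^ℕ` coded by `q`. -/
noncomputable def Phi (q : Baire) : Baire →. Baire := fun p =>
  ⟨ConsistentCode q ∧ ∀ m : ℕ, ∃ i, IsPrefixOf (wn q i) p ∧ m < (wk q i).length,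
   fun _ => Classical.epsilon fun x : Baire =>
      ∀ i, IsPrefixOf (wn q i) p → IsPrefixOf (wk q i) x⟩

/-- The pairing `⟨q,p⟩` on Baire space. -/
def bpair (q p : Baire) : Baire := fun n => if n % 2 = 0 then q (n / 2) else p (n / 2)

/-- Even part of a sequence. -/
def evens (r : Baire) : Baire := fun n => r (2 * n)

/-- Odd part of a sequence. -/
def odds (r : Baire) : Baire := fun n => r (2 * n + 1)

/-- The universal function `U(⟨q,p⟩) = Φ_q(p)`. -/
noncomputable def U : Baire →. Baire := fun r => Phi (evens r) (odds r)

/-- `h` is monotone for the prefix order. -/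
def MonotoneWord (h : List ℕ → List ℕ) : Prop := ∀ u v, u <+: v → h u <+: h v

/-- `h` approximates the partial function `F`. -/
def Approximates (h : List ℕ → List ℕ) (F : Baire →. Baire) : Prop :=
  ∀ p, ∀ hp : (F p).Dom,
    (∀ v, IsPrefixOf v p → IsPrefixOf (h v) ((F p).get hp)) ∧
    (∀ m : ℕ, ∃ v, IsPrefixOf v p ∧ m < (h v).length)

/-- `F :⊆ ℕ^ℕ → ℕ^ℕ` is continuous: some monotone word function approximates it. -/
def ContinuousPF (F : Baire →. Baire) : Prop := ∃ h, MonotoneWord h ∧ Approximates h F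

/-- `F :⊆ ℕ^ℕ → ℕ^ℕ` is computable: some computable monotone word function approximates it. -/
def ComputablePF (F : Baire →. Baire) : Prop :=
  ∃ h, Computable h ∧ MonotoneWord h ∧ Approximates h F

/-- A total function is computable iff it is computable as a partial function with full domain. -/
def ComputableTotal (F : Baire → Baire) : Prop := ComputablePF fun p => Part.some (F p)

/-- A problem (multivalued function on Baire space). -/
abbrev Problem : Type := Baire → Set Baire

/-- `F` is a realizer of the problem `f`. -/
def Realizes (F : Baire →. Baire) (f : Problem) : Prop :=
  ∀ p, (f p).Nonempty → ∃ h : (F p).Dom, (F p).get h ∈ f p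

/-- `f` is continuous: it has a continuous realizer. -/
def ContinuousProblem (f : Problem) : Prop := ∃ F, ContinuousPF F ∧ Realizes F f

/-- The discontinuity problem `DIS`. -/
noncomputable def DIS : Problem := fun p => {q | q ∉ U p}

/-- `D` is a discontinuity function for `f`. -/
def DiscontinuityFunction (D : Baire → Baire) (f : Problem) : Prop :=
  ∀ q, (f (D q)).Nonempty ∧ ∀ y ∈ Phi q (D q), y ∉ f (D q)

/-- `f` is computably discontinuous. -/
def ComputablyDiscontinuous (f : Problem) : Prop :=
  ∃ D, ComputableTotal D ∧ DiscontinuityFunction D f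

/-- `f` is effectively discontinuous. -/
def EffectivelyDiscontinuous (f : Problem) : Prop :=
  ∃ D : Baire → Baire, Continuous D ∧ DiscontinuityFunction D f

/-- Weihrauch reducibility `f ≤_W g`. -/
def WeihrauchRed (f g : Problem) : Prop :=
  ∃ H K : Baire →. Baire, ComputablePF H ∧ ComputablePF K ∧
    ∀ G : Baire →. Baire, Realizes G g →
      Realizes (fun p => (K p).bind fun s => (G s).bind fun t => H (bpair p t)) f

/-- Strong Weihrauch reducibility `f ≤_sW g`. -/
def StrongWeihrauchRed (f g : Problem) : Prop :=
  ∃ H K : Baire →. Baire, ComputablePF H ∧ ComputablePF K ∧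
    ∀ G : Baire →. Baire, Realizes G g →
      Realizes (fun p => (K p).bind fun s => (G s).bind fun t => H t) f

/-- Continuous Weihrauch reducibility `f ≤*_W g`. -/
def ContWeihrauchRed (f g : Problem) : Prop :=
  ∃ H K : Baire →. Baire, ContinuousPF H ∧ ContinuousPF K ∧
    ∀ G : Baire →. Baire, Realizes G g →
      Realizes (fun p => (K p).bind fun s => (G s).bind fun t => H (bpair p t)) f

/-- Continuous strong Weihrauch reducibility `f ≤*_sW g`. -/
def ContStrongWeihrauchRed (f g : Problem) : Prop :=
  ∃ H K : Baire →. Baire, ContinuousPF H ∧ ContinuousPF K ∧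
    ∀ G : Baire →. Baire, Realizes G g →
      Realizes (fun p => (K p).bind fun s => (G s).bind fun t => H t) f

/-- Concatenation of the first `n` moves. -/
def concatN (ms : ℕ → List ℕ) (n : ℕ) : List ℕ := ((List.range n).map ms).flatten

/-- The concatenated play is infinite. -/
def PlayInf (ms : ℕ → List ℕ) : Prop := ∀ m : ℕ, ∃ n, m < (concatN ms n).length

/-- The infinite sequence determined by an infinite play. -/
noncomputable def playLim (ms : ℕ → List ℕ) : Baire :=
  Classical.epsilon fun p : Baire => ∀ n, IsPrefixOf (concatN ms n) p

/-- Player II wins the run of the Wadge game of `f` given by the moves `xs` of I and `ys` of II. -/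
def WadgeIIWins (f : Problem) (xs ys : ℕ → List ℕ) : Prop :=
  (PlayInf xs ∧ (f (playLim xs)).Nonempty) → (PlayInf ys ∧ playLim ys ∈ f (playLim xs))

/-- The list of first `n` moves. -/
def histW (xs : ℕ → List ℕ) (n : ℕ) : List (List ℕ) := (List.range n).map xs

/-- `σ` is a winning strategy for Player II in the Wadge game of `f`. -/
def WadgeWinningII (f : Problem) (σ : List (List ℕ) → List ℕ) : Prop :=
  ∀ xs : ℕ → List ℕ, WadgeIIWins f xs fun i => σ (histW xs (i + 1))

/-- `σ` is a winning strategy for Player I in the Wadge game of `f`. -/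
def WadgeWinningI (f : Problem) (σ : List (List ℕ) → List ℕ) : Prop :=
  ∀ ys : ℕ → List ℕ, ¬ WadgeIIWins f (fun i => σ (histW ys i)) ys

/-- The list of first `n` values of a sequence. -/
def histN (x : Baire) (n : ℕ) : List ℕ := (List.range n).map x

/-- Player II wins the run `(x,y)` of the Lipschitz game of `f`. -/
def LipIIWins (f : Problem) (x y : Baire) : Prop := (f x).Nonempty → y ∈ f x

/-- `σ` is a winning strategy for Player II in the Lipschitz game of `f`. -/
def LipWinningII (f : Problem) (σ : List ℕ → ℕ) : Prop :=
  ∀ x : Baire, LipIIWins f x fun i => σ (histN x (i + 1))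

/-- `σ` is a winning strategy for Player I in the Lipschitz game of `f`. -/
def LipWinningI (f : Problem) (σ : List ℕ → ℕ) : Prop :=
  ∀ y : Baire, ¬ LipIIWins f (fun i => σ (histN y i)) y

/-- `σ` is a winning strategy for Player II in the Gale–Stewart game `A`. -/
def GSWinningII (A : Set Baire) (σ : List ℕ → ℕ) : Prop :=
  ∀ x : Baire, bpair x (fun i => σ (histN x (i + 1))) ∈ A

/-- `σ` is a winning strategy for Player I in the Gale–Stewart game `A`. -/
def GSWinningI (A : Set Baire) (σ : List ℕ → ℕ) : Prop :=
  ∀ y : Baire, bpair (fun i => σ (histN y i)) y ∉ A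

/-- The totalization `Tf` of `f`. -/
def Totalization (f : Problem) : Problem := fun p => {q | (f p).Nonempty → q ∈ f p}

/-- The paired graph `⟨graph(Tf)⟩ ⊆ ℕ^ℕ`. -/
def pairedGraph (f : Problem) : Set Baire :=
  {r | ∃ x y : Baire, r = bpair x y ∧ y ∈ Totalization f x}

/-- Domain of the word concatenation map `w*`. -/
def wstarDom (p : Baire) : Prop := PlayInf fun i => word (p i)

/-- The word concatenation map `w* : p ↦ w(p 0) w(p 1) ⋯` (on its domain). -/
noncomputable def wstar (p : Baire) : Baire := playLim fun i => word (p i)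

/-- The problem `f^w = w*⁻¹ ∘ f ∘ w*`. -/
noncomputable def wordLift (f : Problem) : Problem := fun p =>
  {q | wstarDom p ∧ (f (wstar p)).Nonempty ∧ wstarDom q ∧ wstar q ∈ f (wstar p)}

/-- The `i`-th component of a tupled sequence. -/
def tupleComp (p : Baire) (i : ℕ) : Baire := fun n => p (cpair i n)

/-- The parallelization `⟨f⟩` of `f`. -/
def Parallelization (f : Problem) : Problem := fun p =>
  {q | ∀ i, tupleComp q i ∈ f (tupleComp p i)}

/-- Turing reducibility: `p` is computable relative to the oracle `q`. -/
def TuringLe (p q : Baire) : Prop := ∃ F : Baire →. Baire, ComputablePF F ∧ p ∈ F q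

end

section Helpers

open List

lemma tri_succ (s : ℕ) : (s+1)*(s+2)/2 = s*(s+1)/2 + (s+1) := by
  have h2 : (s+1)*(s+2) = s*(s+1) + 2*(s+1) := by ring
  have he : 2 ∣ s*(s+1) := Nat.even_mul_succ_self s |>.two_dvd
  omega

lemma tri_mono : Monotone (fun s : ℕ => s*(s+1)/2) := by
  apply monotone_nat_of_le_succ
  intro n
  show n*(n+1)/2 ≤ (n+1)*(n+1+1)/2
  rw [show n+1+1 = n+2 from rfl, tri_succ]
  omega

lemma cpair_injective : ∀ a b c d : ℕ, cpair a b = cpair c d → a = c ∧ b = d := by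
  have key : ∀ a b : ℕ, (a+b)*(a+b+1)/2 ≤ cpair a b ∧ cpair a b < (a+b+1)*(a+b+2)/2 := by
    intro a b
    unfold cpair
    constructor
    · omega
    · rw [tri_succ]; omega
  intro a b c d hEq
  have h1 := key a b
  have h2 := key c d
  have hsum : a + b = c + d := by
    by_contra hne
    rcases Nat.lt_or_ge (a+b) (c+d) with hlt | hge
    · have : (a+b+1)*(a+b+2)/2 ≤ (c+d)*(c+d+1)/2 := tri_mono (by omega)
      omega
    · have hlt : c + d < a + b := by omega
      have : (c+d+1)*(c+d+2)/2 ≤ (a+b)*(a+b+1)/2 := tri_mono (by omega)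
      omega
  unfold cpair at hEq
  rw [hsum] at hEq
  omega

lemma cunpair_cpair (n k : ℕ) : cunpair (cpair n k) = (n, k) := by
  have h : ∃ x : ℕ × ℕ, cpair x.1 x.2 = cpair n k := ⟨(n,k), rfl⟩
  have := Classical.epsilon_spec h
  have h2 := cpair_injective _ _ _ _ this
  unfold cunpair
  ext <;> simp [Prod.ext_iff] at h2 ⊢ <;> omega

lemma word_encode (l : List ℕ) : word (Encodable.encode l) = l := by
  simp [word]

end Helpers
section Helpers2
open List

lemma isPrefixOf_iff {l : List ℕ} {p : Baire} :
    IsPrefixOf l p ↔ ∀ j (h : j < l.length), l[j] = p j := by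
  constructor
  · intro hl j hj
    rw [List.getElem_of_eq hl]
    simp
  · intro hval
    apply List.ext_getElem (by simp)
    intro j h1 h2
    simp [hval j h1]

lemma isPrefixOf_nil (p : Baire) : IsPrefixOf [] p := by simp [IsPrefixOf]

lemma IsPrefixOf.trans_prefix {u v : List ℕ} {p : Baire} (huv : u <+: v)
    (hv : IsPrefixOf v p) : IsPrefixOf u p := by
  rw [isPrefixOf_iff] at *
  intro j hj
  rw [← hv j (lt_of_lt_of_le hj huv.length_le)]
  exact List.IsPrefix.getElem huv _

lemma prefix_of_both {u v : List ℕ} {p : Baire} (hu : IsPrefixOf u p)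
    (hv : IsPrefixOf v p) (hlen : u.length ≤ v.length) : u <+: v := by
  rw [isPrefixOf_iff] at hu hv
  refine ⟨v.drop u.length, ?_⟩
  apply List.ext_getElem (by simp; omega)
  intro j h1 h2
  by_cases hj : j < u.length
  · rw [List.getElem_append_left hj, hu j hj, hv j (by omega)]
  · rw [List.getElem_append_right (by omega)]
    simp only [List.getElem_drop]
    congr 1
    omega
lemma eq_on_common_prefix {u : List ℕ} {p p' : Baire} (hp : IsPrefixOf u p)
    (hp' : IsPrefixOf u p') {j : ℕ} (hj : j < u.length) : p j = p' j := by
  rw [isPrefixOf_iff] at hp hp'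
  rw [← hp j hj, hp' j hj]

lemma isPrefixOf_map_range {p : Baire} (n : ℕ) : IsPrefixOf ((List.range n).map p) p := by
  rw [isPrefixOf_iff]; intro j hj; simp at hj ⊢

lemma histN_isPrefixOf (p : Baire) (n : ℕ) : IsPrefixOf (histN p n) p :=
  isPrefixOf_map_range n

-- concatN lemmas
lemma concatN_succ (ms : ℕ → List ℕ) (n : ℕ) :
    concatN ms (n+1) = concatN ms n ++ ms n := by
  simp [concatN, List.range_succ]

lemma concatN_prefix (ms : ℕ → List ℕ) {m n : ℕ} (h : m ≤ n) :
    concatN ms m <+: concatN ms n := by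
  induction n with
  | zero => simp_all
  | succ k ih =>
    rcases Nat.lt_or_ge m (k+1) with h' | h'
    · exact (ih (by omega)).trans ⟨ms k, (concatN_succ ms k).symm⟩
    · have : m = k+1 := by omega
      subst this; exact List.prefix_refl _

lemma exists_playLim {ms : ℕ → List ℕ} (hinf : PlayInf ms) :
    ∃ p : Baire, ∀ n, IsPrefixOf (concatN ms n) p := by
  classical
  refine ⟨fun k => (concatN ms (Nat.find (hinf k))).getD k 0, ?_⟩
  intro n
  rw [isPrefixOf_iff]
  intro j hj
  have hfind := Nat.find_spec (hinf j)
  set N := Nat.find (hinf j)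
  -- concatN ms n and concatN ms N are comparable
  rcases Nat.le_total n N with hle | hle
  · have hpre := concatN_prefix ms hle
    rw [List.getD_eq_getElem _ _ (by omega)]
    exact List.IsPrefix.getElem hpre hj
  · have hpre := concatN_prefix ms hle
    rw [List.getD_eq_getElem _ _ (by omega)]
    exact (List.IsPrefix.getElem hpre hfind).symm

lemma playLim_spec {ms : ℕ → List ℕ} (hinf : PlayInf ms) (n : ℕ) :
    IsPrefixOf (concatN ms n) (playLim ms) :=
  Classical.epsilon_spec (exists_playLim hinf) n

lemma playLim_eq {ms : ℕ → List ℕ} (hinf : PlayInf ms) {p : Baire}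
    (hp : ∀ n, IsPrefixOf (concatN ms n) p) : playLim ms = p := by
  funext k
  obtain ⟨n, hn⟩ := hinf k
  exact eq_on_common_prefix (playLim_spec hinf n) (hp n) hn

end Helpers2
section Direction1
open List

lemma concatN_zero (ms : ℕ → List ℕ) : concatN ms 0 = [] := rfl

lemma histW_flatten (xs : ℕ → List ℕ) (n : ℕ) : (histW xs n).flatten = concatN xs n := rfl

lemma histW_succ (xs : ℕ → List ℕ) (n : ℕ) : histW xs (n+1) = histW xs n ++ [xs n] := by
  simp [histW, List.range_succ]

lemma prefix_append_drop {a b : List ℕ} (h : a <+: b) : a ++ b.drop a.length = b := by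
  obtain ⟨t, rfl⟩ := h
  rw [List.drop_left]

lemma II_wins_of_continuous (f : Problem) (hf : ContinuousProblem f) :
    ∃ σ : List (List ℕ) → List ℕ, WadgeWinningII f σ := by
  obtain ⟨F, ⟨h, hmono, happ⟩, hreal⟩ := hf
  refine ⟨fun l => (h l.flatten).drop (if l.length ≤ 1 then 0 else (h l.dropLast.flatten).length), ?_⟩
  intro xs
  set ys : ℕ → List ℕ :=
    fun i => (h (histW xs (i+1)).flatten).drop
      (if (histW xs (i+1)).length ≤ 1 then 0 else (h (histW xs (i+1)).dropLast.flatten).length)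
    with hys
  have hyslen : ∀ i, (histW xs (i+1)).length = i + 1 := by intro i; simp [histW]
  have hys0 : ys 0 = h (concatN xs 1) := by
    rw [hys]; simp only [hyslen 0, le_refl, if_pos, histW_flatten]; simp
  have hysS : ∀ i, ys (i+1) = (h (concatN xs (i+2))).drop (h (concatN xs (i+1))).length := by
    intro i
    rw [hys]
    simp only [hyslen (i+1)]
    rw [if_neg (by omega), histW_flatten, histW_succ, List.dropLast_concat, histW_flatten]
  have concat_ys : ∀ n, concatN ys (n+1) = h (concatN xs (n+1)) := by
    intro n
    induction n with
    | zero => rw [concatN_succ, concatN_zero, List.nil_append, hys0]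
    | succ k ih =>
      rw [concatN_succ, ih, hysS k]
      exact prefix_append_drop (hmono _ _ (concatN_prefix xs (by omega)))
  rintro ⟨hxinf, hne⟩
  obtain ⟨hp, hmem⟩ := hreal _ hne
  obtain ⟨happ1, happ2⟩ := happ (playLim xs) hp
  have hyinf : PlayInf ys := by
    intro m
    obtain ⟨v, hvx, hlen⟩ := happ2 m
    obtain ⟨n, hn⟩ := hxinf v.length
    have hvpre : v <+: concatN xs (n+1) :=
      prefix_of_both hvx (playLim_spec hxinf (n+1))
        (le_trans (le_of_lt hn) (concatN_prefix xs (by omega)).length_le)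
    exact ⟨n+1, by rw [concat_ys n]; exact lt_of_lt_of_le hlen (hmono _ _ hvpre).length_le⟩
  refine ⟨hyinf, ?_⟩
  have : playLim ys = (F (playLim xs)).get hp := by
    apply playLim_eq hyinf
    intro n
    cases n with
    | zero => rw [concatN_zero]; exact isPrefixOf_nil _
    | succ k => rw [concat_ys k]; exact happ1 _ (playLim_spec hxinf (k+1))
  rw [this]
  exact hmem

end Direction1
section Direction2
open List

def ext0 (l : List ℕ) : Baire := fun j => l.getD j 0

lemma ext0_isPrefixOf (l : List ℕ) : IsPrefixOf l (ext0 l) := by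
  rw [isPrefixOf_iff]
  intro j hj
  exact (List.getD_eq_getElem l 0 hj).symm

def Stable (D : Baire → Baire) (l : List ℕ) (m : ℕ) : Prop :=
  ∀ q : Baire, IsPrefixOf l q → D q m = D (ext0 l) m

def Lset (D : Baire → Baire) (l : List ℕ) : Set ℕ :=
  {L | L ≤ l.length ∧ ∀ m < L, Stable D l m}

noncomputable def Lgood (D : Baire → Baire) (l : List ℕ) : ℕ := sSup (Lset D l)

lemma Lset_bddAbove (D : Baire → Baire) (l : List ℕ) : BddAbove (Lset D l) :=
  ⟨l.length, fun _ hL => hL.1⟩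

lemma Lgood_mem (D : Baire → Baire) (l : List ℕ) : Lgood D l ∈ Lset D l :=
  Nat.sSup_mem ⟨0, by simp [Lset]⟩ (Lset_bddAbove D l)

lemma Lgood_le (D : Baire → Baire) (l : List ℕ) : Lgood D l ≤ l.length :=
  (Lgood_mem D l).1

lemma Lgood_stable (D : Baire → Baire) (l : List ℕ) {m : ℕ} (hm : m < Lgood D l) :
    Stable D l m := (Lgood_mem D l).2 m hm

lemma le_Lgood (D : Baire → Baire) {l : List ℕ} {L : ℕ} (hL : L ∈ Lset D l) :
    L ≤ Lgood D l := le_csSup (Lset_bddAbove D l) hL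

lemma Lgood_nil (D : Baire → Baire) : Lgood D [] = 0 := by
  have := Lgood_le D []
  simpa using this

lemma Stable.mono (D : Baire → Baire) {l l' : List ℕ} (h : l <+: l') {m : ℕ}
    (hs : Stable D l m) : Stable D l' m := by
  intro q hq
  rw [hs q (hq.trans_prefix (huv := h)), hs (ext0 l') ((ext0_isPrefixOf l').trans_prefix (huv := h))]

lemma Lgood_mono (D : Baire → Baire) {l l' : List ℕ} (h : l <+: l') :
    Lgood D l ≤ Lgood D l' := by
  apply le_Lgood
  exact ⟨le_trans (Lgood_le D l) h.length_le, fun m hm => (Lgood_stable D l hm).mono D h⟩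

noncomputable def cOut (D : Baire → Baire) (l : List ℕ) : List ℕ :=
  (List.range (Lgood D l)).map (fun m => D (ext0 l) m)

lemma cOut_length (D : Baire → Baire) (l : List ℕ) : (cOut D l).length = Lgood D l := by
  simp [cOut]

lemma cOut_isPrefixOf (D : Baire → Baire) {l : List ℕ} {q : Baire} (hq : IsPrefixOf l q) :
    IsPrefixOf (cOut D l) (D q) := by
  rw [isPrefixOf_iff]
  intro j hj
  rw [cOut_length] at hj
  have := Lgood_stable D l hj q hq
  simp [cOut, this]

lemma cOut_prefix (D : Baire → Baire) {l l' : List ℕ} (h : l <+: l') :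
    cOut D l <+: cOut D l' := by
  apply prefix_of_both (p := D (ext0 l'))
  · exact cOut_isPrefixOf D ((ext0_isPrefixOf l').trans_prefix (huv := h))
  · exact cOut_isPrefixOf D (ext0_isPrefixOf l')
  · rw [cOut_length, cOut_length]; exact Lgood_mono D h

lemma cont_modulus {D : Baire → Baire} (hD : Continuous D) (q : Baire) (m : ℕ) :
    ∃ n, ∀ q' : Baire, (∀ j < n, q' j = q j) → D q' m = D q m := by
  have hopen : IsOpen {r : Baire | D r m = D q m} := by
    have : {r : Baire | D r m = D q m} = (fun r => D r m) ⁻¹' {D q m} := rfl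
    rw [this]
    exact (isOpen_discrete _).preimage ((continuous_apply m).comp hD)
  obtain ⟨I, u, hIu, hsub⟩ := isOpen_pi_iff.mp hopen q rfl
  refine ⟨(I.sup id) + 1, fun q' hq' => ?_⟩
  apply hsub
  intro i hi
  rw [hq' i (Nat.lt_succ_of_le (Finset.le_sup (f := id) hi))]
  exact (hIu i hi).2

noncomputable def qlist (D : Baire → Baire) (ys : ℕ → List ℕ) : ℕ → List ℕ
  | 0 => []
  | (i+1) => qlist D ys i ++
      [cpair (Encodable.encode (cOut D (qlist D ys i))) (Encodable.encode (concatN ys (i+1)))]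

lemma qlist_length (D : Baire → Baire) (ys : ℕ → List ℕ) (i : ℕ) :
    (qlist D ys i).length = i := by
  induction i with
  | zero => rfl
  | succ k ih => simp [qlist, ih]

lemma qlist_prefix (D : Baire → Baire) (ys : ℕ → List ℕ) {i j : ℕ} (h : i ≤ j) :
    qlist D ys i <+: qlist D ys j := by
  induction j with
  | zero => simp_all
  | succ k ih =>
    rcases Nat.lt_or_ge i (k+1) with h' | h'
    · exact (ih (by omega)).trans ⟨_, rfl⟩
    · have : i = k+1 := by omega
      subst this; exact List.prefix_refl _

lemma qlist_dropLast (D : Baire → Baire) (ys : ℕ → List ℕ) (i : ℕ) :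
    (qlist D ys i).dropLast = qlist D ys (i-1) := by
  cases i with
  | zero => rfl
  | succ k => simp [qlist]

noncomputable def qOf (D : Baire → Baire) (ys : ℕ → List ℕ) : Baire :=
  fun i => (qlist D ys (i+1)).getD i 0

lemma qOf_eval (D : Baire → Baire) (ys : ℕ → List ℕ) (i : ℕ) :
    qOf D ys i = cpair (Encodable.encode (cOut D (qlist D ys i)))
      (Encodable.encode (concatN ys (i+1))) := by
  unfold qOf
  rw [show qlist D ys (i+1) = qlist D ys i ++ [_] from rfl]
  rw [List.getD_eq_getElem _ _ (by simp [qlist_length])]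
  rw [List.getElem_append_right (by simp [qlist_length])]
  simp [qlist_length]

lemma histN_qOf (D : Baire → Baire) (ys : ℕ → List ℕ) (i : ℕ) :
    histN (qOf D ys) i = qlist D ys i := by
  induction i with
  | zero => rfl
  | succ k ih =>
    have : histN (qOf D ys) (k+1) = histN (qOf D ys) k ++ [qOf D ys k] := by
      simp [histN, List.range_succ]
    rw [this, ih, qOf_eval]
    rfl

lemma qlist_isPrefixOf (D : Baire → Baire) (ys : ℕ → List ℕ) (i : ℕ) :
    IsPrefixOf (qlist D ys i) (qOf D ys) := by
  rw [← histN_qOf]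
  exact histN_isPrefixOf _ _

lemma concatN_congr {ys ys' : ℕ → List ℕ} {n : ℕ} (h : ∀ j < n, ys j = ys' j) :
    concatN ys n = concatN ys' n := by
  unfold concatN
  congr 1
  apply List.map_congr_left
  intro j hj
  exact h j (by simpa using hj)

lemma qlist_congr (D : Baire → Baire) {ys ys' : ℕ → List ℕ} {i : ℕ}
    (h : ∀ j < i, ys j = ys' j) : qlist D ys i = qlist D ys' i := by
  induction i with
  | zero => rfl
  | succ k ih =>
    unfold qlist
    rw [ih (fun j hj => h j (by omega)), concatN_congr (fun j hj => h j (by omega))]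

end Direction2
section Direction2b
open List

noncomputable def sigmaI (D : Baire → Baire) : List (List ℕ) → List ℕ := fun l =>
  (cOut D (qlist D (fun j => l.getD j []) l.length)).drop
    (Lgood D ((qlist D (fun j => l.getD j []) l.length).dropLast))

lemma I_wins_of_ED (f : Problem) (hf : EffectivelyDiscontinuous f) :
    ∃ σ : List (List ℕ) → List ℕ, WadgeWinningI f σ := by
  classical
  obtain ⟨D, hD, hdisc⟩ := hf
  refine ⟨sigmaI D, ?_⟩
  intro ys
  set q : Baire := qOf D ys with hqdef
  have hgetD : ∀ i j, j < i → (histW ys i).getD j [] = ys j := by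
    intro i j hj
    rw [List.getD_eq_getElem _ _ (by simp [histW]; omega)]
    simp [histW]
  have hq' : ∀ i, qlist D (fun j => (histW ys i).getD j []) ((histW ys i).length)
      = qlist D ys i := by
    intro i
    rw [show (histW ys i).length = i by simp [histW]]
    exact qlist_congr D (fun j hj => hgetD i j hj)
  have hX : ∀ i, sigmaI D (histW ys i)
      = (cOut D (qlist D ys i)).drop (Lgood D (qlist D ys (i-1))) := by
    intro i
    unfold sigmaI
    rw [hq' i, qlist_dropLast]
  have hXeq : (fun i => sigmaI D (histW ys i))
      = fun i => (cOut D (qlist D ys i)).drop (Lgood D (qlist D ys (i-1))) :=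
    funext fun i => hX i
  rw [hXeq]
  set X : ℕ → List ℕ := fun i => (cOut D (qlist D ys i)).drop (Lgood D (qlist D ys (i-1)))
    with hXdef
  have concat_xs : ∀ n, concatN X (n+1) = cOut D (qlist D ys n) := by
    intro n
    induction n with
    | zero =>
      rw [concatN_succ, concatN_zero, List.nil_append]
      show (cOut D (qlist D ys 0)).drop (Lgood D (qlist D ys (0-1))) = _
      rw [show qlist D ys (0-1) = ([] : List ℕ) from rfl, Lgood_nil, List.drop_zero]
    | succ k ih =>
      rw [concatN_succ, ih]
      have h1 : X (k+1) = (cOut D (qlist D ys (k+1))).drop (Lgood D (qlist D ys k)) := by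
        simp [hXdef]
      rw [h1, ← cOut_length D (qlist D ys k)]
      exact prefix_append_drop (cOut_prefix D (qlist_prefix D ys (by omega)))
  have hLinf : ∀ m, ∃ i, m < Lgood D (qlist D ys i) := by
    intro m
    choose ν hν using fun m' => cont_modulus hD q m'
    set N := max (m+1) ((Finset.range (m+1)).sup ν) with hN
    refine ⟨N, ?_⟩
    have hmem : m+1 ∈ Lset D (qlist D ys N) := by
      constructor
      · rw [qlist_length]; omega
      · intro m' hm' r hr
        have hν' : ν m' ≤ N :=
          le_trans (Finset.le_sup (by simp; omega)) (le_max_right _ _)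
        have hagree : ∀ p : Baire, IsPrefixOf (qlist D ys N) p → ∀ j < N, p j = q j := by
          intro p hp j hj
          exact eq_on_common_prefix hp (qlist_isPrefixOf D ys N)
            (by rw [qlist_length]; omega)
        rw [hν m' r (fun j hj => hagree r hr j (lt_of_lt_of_le hj hν')),
            hν m' (ext0 (qlist D ys N))
              (fun j hj => hagree _ (ext0_isPrefixOf _) j (lt_of_lt_of_le hj hν'))]
    have := le_Lgood D hmem
    omega
  have hxinf : PlayInf X := by
    intro m
    obtain ⟨i, hi⟩ := hLinf m
    exact ⟨i+1, by rw [concat_xs i, cOut_length]; exact hi⟩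
  have hpref : ∀ n, IsPrefixOf (concatN X n) (D q) := by
    intro n
    cases n with
    | zero => rw [concatN_zero]; exact isPrefixOf_nil _
    | succ k => rw [concat_xs k]; exact cOut_isPrefixOf D (qlist_isPrefixOf D ys k)
  have hx : playLim X = D q := playLim_eq hxinf hpref
  have hwn : ∀ i, wn q i = cOut D (qlist D ys i) := by
    intro i
    unfold wn
    rw [show q i = _ from qOf_eval D ys i, cunpair_cpair, word_encode]
  have hwk : ∀ i, wk q i = concatN ys (i+1) := by
    intro i
    unfold wk
    rw [show q i = _ from qOf_eval D ys i, cunpair_cpair, word_encode]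
  have hwnpre : ∀ i, IsPrefixOf (wn q i) (D q) := by
    intro i
    rw [hwn i, ← concat_xs i]
    exact hpref (i+1)
  obtain ⟨hfne, hnot⟩ := hdisc q
  intro hwin
  obtain ⟨hyinf, hymem⟩ := hwin ⟨hxinf, by rw [hx]; exact hfne⟩
  rw [hx] at hymem
  have hyP : ∀ i, IsPrefixOf (wn q i) (D q) → IsPrefixOf (wk q i) (playLim ys) := by
    intro i _
    rw [hwk i]
    exact playLim_spec hyinf (i+1)
  have hdom : (Phi q (D q)).Dom := by
    refine ⟨?_, ?_⟩
    · intro i j _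
      rw [WordComparable, hwk i, hwk j]
      rcases Nat.le_total i j with hij | hij
      · exact Or.inl (concatN_prefix ys (by omega))
      · exact Or.inr (concatN_prefix ys (by omega))
    · intro m
      obtain ⟨n, hn⟩ := hyinf m
      cases n with
      | zero => rw [concatN_zero] at hn; simp at hn
      | succ k => exact ⟨k, hwnpre k, by rw [hwk k]; exact hn⟩
  have hmemPhi : playLim ys ∈ Phi q (D q) := by
    refine ⟨hdom, ?_⟩
    show Classical.epsilon _ = playLim ys
    have hex : ∃ x : Baire, ∀ i, IsPrefixOf (wn q i) (D q) → IsPrefixOf (wk q i) x :=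
      ⟨playLim ys, hyP⟩
    have hP := Classical.epsilon_spec hex
    funext k
    obtain ⟨n, hn⟩ := hyinf k
    cases n with
    | zero => rw [concatN_zero] at hn; simp at hn
    | succ i =>
      have h1 := hP i (hwnpre i)
      have h2 := hyP i (hwnpre i)
      exact eq_on_common_prefix h1 h2 (by rw [hwk i]; exact hn)
  exact hnot (playLim ys) hmemPhi hymem

end Direction2b

/-- Weihrauch determinacy implies Wadge determinacy. -/
theorem weihrauch_determinacy_implies_wadge_determinacy
    (h : ∀ f : Problem, ContinuousProblem f ∨ EffectivelyDiscontinuous f)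
    (A B : Set Baire) :
    (∃ σ : List (List ℕ) → List ℕ,
        WadgeWinningI (fun p => {q | (p ∈ A ∧ q ∈ B) ∨ (p ∉ A ∧ q ∉ B)}) σ) ∨
    (∃ σ : List (List ℕ) → List ℕ,
        WadgeWinningII (fun p => {q | (p ∈ A ∧ q ∈ B) ∨ (p ∉ A ∧ q ∉ B)}) σ) := by
  rcases h (fun p => {q | (p ∈ A ∧ q ∈ B) ∨ (p ∉ A ∧ q ∉ B)}) with hc | hd
  · exact Or.inr (II_wins_of_continuous _ hc)
  · exact Or.inl (I_wins_of_ED _ hd)
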